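/- arXiv:0811.3738 — 2 statements merged into one kernel-verified Lean document; each statement's English description precedes it below -/
import Mathlib

section
/- Let H be a finite-dimensional semisimple Hopf algebra over an algebraically closed field of characteristic zero with Fourier transforms F_H : H → H*, F_H(a) = a ⇀ t_H, and F_K : K → K* for a Hopf subalgebra K. Then for all a ∈ K, the restriction of F_H(a) to K equals F_K(a); i.e., the diagram with the inclusion i : K → H and restriction i* : H* → K* commutes: i* ∘ F_H ∘ i = F_K. -/
open TensorProduct

noncomputable section

namespace Paper

set_option linter.unusedSectionVars false

variable (k : Type) [Field k]



section Conv

variable (H : Type) [AddCommGroup H] [Module k H] [Coalgebra k H]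

/-- Convolution product on the dual of a coalgebra. -/
def conv (f g : Module.Dual k H) : Module.Dual k H :=
  (LinearMap.mul' k k) ∘ₗ (TensorProduct.map f g) ∘ₗ (Coalgebra.comul (R := k))

end Conv

section Fourier

variable (H : Type) [Ring H] [Algebra k H]

/-- The Fourier transform associated to a functional `t`: `fourier t a = (b ↦ t (b * a))`. -/
def fourier (t : Module.Dual k H) : H →ₗ[k] Module.Dual k H where
  toFun a := t ∘ₗ LinearMap.mulRight k a
  map_add' a b := by ext x; simp [mul_add]
  map_smul' c a := by ext x; simp [mul_smul_comm]

end Fourier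

section Act

variable (H : Type) [Ring H] [HopfAlgebra k H]

/-- The bilinear map sending `p ⊗ q` to the operator `x ↦ p * x * q`. -/
def sandwich : H ⊗[k] H →ₗ[k] (H →ₗ[k] H) :=
  TensorProduct.lift
    { toFun := fun p =>
        { toFun := fun q => (LinearMap.mulLeft k p) ∘ₗ (LinearMap.mulRight k q)
          map_add' := fun q r => by ext x; simp [mul_add]
          map_smul' := fun c q => by ext x; simp [mul_smul_comm] }
      map_add' := fun p p' => by ext q x; simp [add_mul]
      map_smul' := fun c p => by ext q x; simp [smul_mul_assoc] }

/-- The (left) adjoint action of `H` on itself: `adAct a x = ∑ a₁ * x * S(a₂)`. -/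
def adAct : H →ₗ[k] (H →ₗ[k] H) :=
  (sandwich k H) ∘ₗ (LinearMap.lTensor H (HopfAlgebra.antipode (R := k))) ∘ₗ
    (Coalgebra.comul (R := k))

/-- The action of `a ∈ H` on `f ∈ H*` given by `(a · f)(x) = f(∑ S(a₂) x a₁)`
(the coadjoint action appearing in the `D(H)`-module `H*`; here `S = S⁻¹` since `S² = id`). -/
def coadAct (a : H) (f : Module.Dual k H) : Module.Dual k H :=
  f ∘ₗ (sandwich k H
    ((LinearMap.rTensor H (HopfAlgebra.antipode (R := k)))
      ((TensorProduct.comm k H H) (Coalgebra.comul (R := k) a))))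

/-- The action of `f ∈ H*` on `H` given by `f · h = ∑ f(S(h₁)) h₂` (with `S = S⁻¹`). -/
def dualAct (f : Module.Dual k H) : H →ₗ[k] H :=
  (TensorProduct.lid k H).toLinearMap ∘ₗ
    (LinearMap.rTensor H (f ∘ₗ HopfAlgebra.antipode (R := k))) ∘ₗ (Coalgebra.comul (R := k))

/-- The operator `a ↦ ∑ a₁ χ(S(a₂))` associated to a functional `χ`. -/
def chiOp (χ : Module.Dual k H) : H →ₗ[k] H :=
  (TensorProduct.rid k H).toLinearMap ∘ₗ
    (LinearMap.lTensor H (χ ∘ₗ HopfAlgebra.antipode (R := k))) ∘ₗ (Coalgebra.comul (R := k))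

/-- The map `v ↦ ∑ (S(v₃) * v₁) ⊗ v₂`. -/
def conormalMap : H →ₗ[k] H ⊗[k] H :=
  (TensorProduct.comm k H H).toLinearMap ∘ₗ
  (LinearMap.lTensor H (LinearMap.mul' k H)) ∘ₗ
  (TensorProduct.assoc k H H H).toLinearMap ∘ₗ
  (TensorProduct.comm k H (H ⊗[k] H)).toLinearMap ∘ₗ
  (LinearMap.lTensor H (LinearMap.lTensor H (HopfAlgebra.antipode (R := k)))) ∘ₗ
  (LinearMap.lTensor H (Coalgebra.comul (R := k))) ∘ₗ
  (Coalgebra.comul (R := k))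

/-- A subspace `I ⊆ H` is co-normal if `∑ S(v₃)v₁ ⊗ v₂ ∈ H ⊗ I` for every `v ∈ I`. -/
def IsConormal (I : Submodule k H) : Prop :=
  ∀ v ∈ I, conormalMap k H v ∈ LinearMap.range (LinearMap.lTensor H I.subtype)

/-- The adjoint action of `H*` on itself, written via the canonical identifications:
`(adDual f g)(x) = ∑ f(x₁ * S(x₃)) g(x₂)`, i.e. `adDual f g = ∑ f₁ * g * S(f₂)` in `H*`. -/
def adDual (f g : Module.Dual k H) : Module.Dual k H :=
  (LinearMap.mul' k k) ∘ₗ (TensorProduct.map f g) ∘ₗ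
  (LinearMap.rTensor H (LinearMap.mul' k H)) ∘ₗ
  (TensorProduct.assoc k H H H).symm.toLinearMap ∘ₗ
  (LinearMap.lTensor H (TensorProduct.comm k H H).toLinearMap) ∘ₗ
  (LinearMap.lTensor H (LinearMap.lTensor H (HopfAlgebra.antipode (R := k)))) ∘ₗ
  (LinearMap.lTensor H (Coalgebra.comul (R := k))) ∘ₗ
  (Coalgebra.comul (R := k))

end Act

section Char

variable (H : Type) [Ring H] [Algebra k H]

/-- The character of an `H`-module `M` (trace of the action). -/
def moduleChar (M : Type) [AddCommGroup M] [Module k M] [Module H M]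
    [IsScalarTower k H M] : Module.Dual k H :=
  (LinearMap.trace k M) ∘ₗ (Algebra.lsmul k k M : H →ₐ[k] Module.End k M).toLinearMap

/-- The character ring `C(H)` of `H`, as a subspace of `H*`: the span of characters of
finite-dimensional `H`-modules. -/
def charRing : Submodule k (Module.Dual k H) :=
  Submodule.span k {f | ∃ (M : Type) (_ : AddCommGroup M) (_ : Module k M) (_ : Module H M)
      (_ : IsScalarTower k H M) (_ : Module.Finite k M), f = moduleChar k H M}

/-- `f` is an irreducible character of `H`. -/
def IsIrrChar (f : Module.Dual k H) : Prop :=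
  ∃ (M : Type) (_ : AddCommGroup M) (_ : Module k M) (_ : Module H M)
      (_ : IsScalarTower k H M), Module.Finite k M ∧ IsSimpleModule H M ∧ f = moduleChar k H M

end Char




section Ind

variable (K H : Type) [Ring K] [Ring H] [HopfAlgebra k K] [HopfAlgebra k H]
variable (i : K →ₐc[k] H)
variable (V : Type) [AddCommGroup V] [Module k V] [Module K V] [IsScalarTower k K V]

/-- The subspace of `H ⊗ V` by which one quotients to obtain the induced module `H ⊗_K V`. -/
def indRel : Submodule k (H ⊗[k] V) :=
  Submodule.span k {z | ∃ (h : H) (x : K) (v : V), z = (h * i x) ⊗ₜ[k] v - h ⊗ₜ[k] (x • v)}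

/-- The induced module `H ⊗_K V`. -/
abbrev IndMod := (H ⊗[k] V) ⧸ indRel k K H i V

lemma indRel_mapsTo (h' : H) :
    (indRel k K H i V).map ((LinearMap.mulLeft k h').rTensor V) ≤ indRel k K H i V := by
  rw [indRel, Submodule.map_span]
  refine Submodule.span_le.2 ?_
  rintro _ ⟨_, ⟨h, x, v, rfl⟩, rfl⟩
  refine Submodule.subset_span ⟨h' * h, x, v, ?_⟩
  simp [mul_assoc]

/-- Left multiplication by `h' : H` on the induced module. -/
def indSmul (h' : H) : IndMod k K H i V →ₗ[k] IndMod k K H i V :=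
  Submodule.mapQ _ _ ((LinearMap.mulLeft k h').rTensor V)
    (Submodule.map_le_iff_le_comap.mp (indRel_mapsTo k K H i V h'))

lemma indSmul_mk (h' h : H) (v : V) :
    indSmul k K H i V h' (Submodule.Quotient.mk (h ⊗ₜ[k] v)) =
      Submodule.Quotient.mk ((h' * h) ⊗ₜ[k] v) := rfl

/-- The algebra map `H → End (IndMod)` defining the `H`-module structure on the
induced module. -/
def indActHom : H →ₐ[k] Module.End k (IndMod k K H i V) where
  toFun h' := indSmul k K H i V h'
  map_one' := by
    refine Submodule.linearMap_qext _ ?_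
    ext h v
    simp only [LinearMap.coe_comp, Function.comp_apply, AlgebraTensorModule.curry_apply,
      curry_apply, LinearMap.coe_restrictScalars, Submodule.mkQ_apply, indSmul_mk, one_mul,
      Module.End.one_apply]
  map_mul' a b := by
    refine Submodule.linearMap_qext _ ?_
    ext h v
    simp only [LinearMap.coe_comp, Function.comp_apply, AlgebraTensorModule.curry_apply,
      curry_apply, LinearMap.coe_restrictScalars, Submodule.mkQ_apply, indSmul_mk,
      Module.End.mul_apply, mul_assoc]
  map_zero' := by
    refine Submodule.linearMap_qext _ ?_
    ext h v
    simp only [LinearMap.coe_comp, Function.comp_apply, AlgebraTensorModule.curry_apply,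
      curry_apply, LinearMap.coe_restrictScalars, Submodule.mkQ_apply, indSmul_mk, zero_mul,
      LinearMap.zero_apply]
    rw [zero_tmul]
    exact Submodule.Quotient.mk_eq_zero _ |>.2 (Submodule.zero_mem _)
  map_add' a b := by
    refine Submodule.linearMap_qext _ ?_
    ext h v
    simp only [LinearMap.coe_comp, Function.comp_apply, AlgebraTensorModule.curry_apply,
      curry_apply, LinearMap.coe_restrictScalars, Submodule.mkQ_apply, indSmul_mk,
      LinearMap.add_apply, add_mul, add_tmul]
    rw [Submodule.Quotient.mk_add]
  commutes' c := by
    refine Submodule.linearMap_qext _ ?_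
    ext h v
    simp only [LinearMap.coe_comp, Function.comp_apply, AlgebraTensorModule.curry_apply,
      curry_apply, LinearMap.coe_restrictScalars, Submodule.mkQ_apply, indSmul_mk,
      Module.algebraMap_end_apply]
    rw [← Submodule.Quotient.mk_smul, smul_tmul', Algebra.smul_def]

instance : Module H (IndMod k K H i V) :=
  Module.compHom _ (indActHom k K H i V).toRingHom

instance : IsScalarTower k H (IndMod k K H i V) where
  smul_assoc c h z := by
    change indActHom k K H i V (c • h) z = c • (indActHom k K H i V h z)
    rw [map_smul]
    rfl

instance [Module.Finite k H] [Module.Finite k V] : Module.Finite k (IndMod k K H i V) :=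
  Module.Finite.of_surjective (indRel k K H i V).mkQ (Submodule.Quotient.mk_surjective _)

end Ind




section Subcoalg

variable (H : Type) [AddCommGroup H] [Module k H] [Coalgebra k H]

/-- `C` is a subcoalgebra of `H` if `Δ(C) ⊆ C ⊗ C`. -/
def IsSubcoalgebra (C : Submodule k H) : Prop :=
  ∀ x ∈ C, Coalgebra.comul (R := k) x ∈
    LinearMap.range (TensorProduct.map C.subtype C.subtype)

/-- A simple (nonzero, minimal) subcoalgebra. -/
def IsSimpleSubcoalgebra (C : Submodule k H) : Prop :=
  IsSubcoalgebra k H C ∧ C ≠ ⊥ ∧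
    ∀ D : Submodule k H, D ≤ C → IsSubcoalgebra k H D → D = ⊥ ∨ D = C

/-- The coaction `C → H ⊗ C` of a subcoalgebra, obtained by corestricting `Δ`. -/
def coact (C : Submodule k H) (hC : IsSubcoalgebra k H C) : C →ₗ[k] H ⊗[k] C :=
  ((LinearEquiv.ofInjective (LinearMap.lTensor H C.subtype)
      (Module.Flat.lTensor_preserves_injective_linearMap C.subtype C.injective_subtype)).symm :
        LinearMap.range (LinearMap.lTensor H C.subtype) ≃ₗ[k] H ⊗[k] C) ∘ₗ
    (LinearMap.codRestrict (LinearMap.range (LinearMap.lTensor H C.subtype))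
      ((Coalgebra.comul (R := k)) ∘ₗ C.subtype)
      (fun x => by
        obtain ⟨y, hy⟩ := hC x x.2
        exact ⟨(LinearMap.rTensor C C.subtype) y, by
          rw [← LinearMap.comp_apply, LinearMap.lTensor_comp_rTensor, hy]; rfl⟩))

variable [FiniteDimensional k H]

/-- The character `d_C ∈ H` of a finite-dimensional subcoalgebra `C ⊆ H`, viewed as a left
`H`-comodule; in the notation of the paper, `d_C = ∑_{d ∈ Irr(C)} ε(d) d`. -/
def dC (C : Submodule k H) (hC : IsSubcoalgebra k H C) : H :=
  (TensorProduct.rid k H)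
    ((LinearMap.lTensor H (contractRight k C))
      ((TensorProduct.assoc k H C (Module.Dual k C))
        ((LinearMap.rTensor (Module.Dual k C) (coact k H C hC))
          (coevaluation k C 1))))

end Subcoalg

section TensorMod

variable (H : Type) [Ring H] [HopfAlgebra k H]
variable (M N : Type) [AddCommGroup M] [Module k M] [Module H M] [IsScalarTower k H M]
variable [AddCommGroup N] [Module k N] [Module H N] [IsScalarTower k H N]

/-- The representation of `H` on `M ⊗ N` via comultiplication. -/
def tensorRep : H →ₐ[k] Module.End k (M ⊗[k] N) :=
  (Module.endTensorEndAlgHom (R := k) (S := k) (A := k) (M := M) (N := N)).comp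
    ((Algebra.TensorProduct.map
        (Algebra.lsmul k k M : H →ₐ[k] Module.End k M)
        (Algebra.lsmul k k N : H →ₐ[k] Module.End k N)).comp
      (Bialgebra.comulAlgHom k H))

end TensorMod

/-- The tensor product of two `H`-modules, with the diagonal `H`-action. -/
def TensorMod (k : Type) [Field k] (H : Type) [Ring H] [HopfAlgebra k H]
    (M N : Type) [AddCommGroup M] [Module k M] [Module H M] [IsScalarTower k H M]
    [AddCommGroup N] [Module k N] [Module H N] [IsScalarTower k H N] : Type := M ⊗[k] N

section TensorMod2

variable (H : Type) [Ring H] [HopfAlgebra k H]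
variable (M N : Type) [AddCommGroup M] [Module k M] [Module H M] [IsScalarTower k H M]
variable [AddCommGroup N] [Module k N] [Module H N] [IsScalarTower k H N]

instance : AddCommGroup (TensorMod k H M N) := inferInstanceAs (AddCommGroup (M ⊗[k] N))
instance : Module k (TensorMod k H M N) := inferInstanceAs (Module k (M ⊗[k] N))

instance : Module H (TensorMod k H M N) :=
  Module.compHom (M ⊗[k] N) (tensorRep k H M N).toRingHom

instance : IsScalarTower k H (TensorMod k H M N) where
  smul_assoc c h z := by
    change tensorRep k H M N (c • h) z = c • (tensorRep k H M N h z)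
    rw [map_smul]
    rfl

instance [Module.Finite k M] [Module.Finite k N] : Module.Finite k (TensorMod k H M N) :=
  inferInstanceAs (Module.Finite k (M ⊗[k] N))

end TensorMod2

/-- The restriction of an `H`-module to `K` along `i`. -/
def ResMod (k : Type) [Field k] (K H : Type) [Ring K] [Ring H] [HopfAlgebra k K]
    [HopfAlgebra k H] (i : K →ₐc[k] H) (M : Type) [AddCommGroup M] [Module k M]
    [Module H M] [IsScalarTower k H M] : Type := M

section ResMod2

variable (K H : Type) [Ring K] [Ring H] [HopfAlgebra k K] [HopfAlgebra k H]
variable (i : K →ₐc[k] H)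
variable (M : Type) [AddCommGroup M] [Module k M] [Module H M] [IsScalarTower k H M]

instance : AddCommGroup (ResMod k K H i M) := inferInstanceAs (AddCommGroup M)
instance : Module k (ResMod k K H i M) := inferInstanceAs (Module k M)

instance : Module K (ResMod k K H i M) :=
  Module.compHom M ((i : K →ₐ[k] H) : K →+* H)

instance : IsScalarTower k K (ResMod k K H i M) where
  smul_assoc c x m := by
    have h : ((i : K →ₐ[k] H) (c • x)) • (id m : M) =
        c • (((i : K →ₐ[k] H) x) • (id m : M)) := by
      rw [map_smul, smul_assoc]
    exact h

instance [Module.Finite k M] : Module.Finite k (ResMod k K H i M) :=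
  inferInstanceAs (Module.Finite k M)

end ResMod2

/-- the diagram `i* ∘ F_H ∘ i = F_K` commutes. -/
theorem fourier_restriction_commutes
    (k : Type) [Field k] [IsAlgClosed k] [CharZero k]
    (H : Type) [Ring H] [HopfAlgebra k H] [FiniteDimensional k H] [IsSemisimpleRing H]
    (K : Type) [Ring K] [HopfAlgebra k K] [FiniteDimensional k K] [IsSemisimpleRing K]
    (i : K →ₐc[k] H) (hi : Function.Injective i)
    (tH : Module.Dual k H)
    (htH : ∀ f : Module.Dual k H, conv k H f tH = f 1 • tH ∧ conv k H tH f = f 1 • tH)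
    (htH1 : tH 1 = 1)
    (tK : Module.Dual k K)
    (htK : ∀ f : Module.Dual k K, conv k K f tK = f 1 • tK ∧ conv k K tK f = f 1 • tK)
    (htK1 : tK 1 = 1)
    :
    ∀ a : K, (fourier k H tH (i a)) ∘ₗ i.toLinearMap = fourier k K tK a := by
  -- Step 1: convolution is compatible with restriction along the bialgebra map `i`.
  have hcomp : ∀ p q : Module.Dual k H,
      conv k K (p ∘ₗ i.toLinearMap) (q ∘ₗ i.toLinearMap) = (conv k H p q) ∘ₗ i.toLinearMap := by
    intro p q
    unfold conv
    have h1 : TensorProduct.map (p ∘ₗ i.toLinearMap) (q ∘ₗ i.toLinearMap) =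
        (TensorProduct.map p q) ∘ₗ (TensorProduct.map i.toLinearMap i.toLinearMap) := by
      rw [TensorProduct.map_comp]
    have h2 : (TensorProduct.map i.toLinearMap i.toLinearMap) ∘ₗ
        (Coalgebra.comul (R := k) (A := K)) =
        (Coalgebra.comul (R := k) (A := H)) ∘ₗ i.toLinearMap :=
      CoalgHomClass.map_comp_comul i
    rw [h1, LinearMap.comp_assoc, LinearMap.comp_assoc, h2]
    rfl
  -- Step 2: `tH ∘ i = tK`.
  have key : tH ∘ₗ i.toLinearMap = tK := by
    obtain ⟨g', hg'⟩ := i.toLinearMap.exists_leftInverse_of_injective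
      (LinearMap.ker_eq_bot.2 hi)
    set g : Module.Dual k H := tK ∘ₗ g' with hg
    have hgi : g ∘ₗ i.toLinearMap = tK := by
      rw [hg, LinearMap.comp_assoc, hg', LinearMap.comp_id]
    have hi1 : i (1 : K) = 1 := map_one i
    have e1 : conv k K (tH ∘ₗ i.toLinearMap) tK = tK := by
      rw [(htK (tH ∘ₗ i.toLinearMap)).1]
      have : (tH ∘ₗ i.toLinearMap) (1 : K) = 1 := by
        show tH (i 1) = 1
        rw [hi1, htH1]
      rw [this, one_smul]
    have e2 : conv k K (tH ∘ₗ i.toLinearMap) tK = tH ∘ₗ i.toLinearMap := by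
      conv_lhs => rw [← hgi]
      rw [hcomp tH g, (htH g).2]
      have hg1 : g (1 : H) = 1 := by
        have h := LinearMap.congr_fun hgi (1 : K)
        have h2 : g (i 1) = tK 1 := h
        rwa [hi1, htK1] at h2
      rw [hg1, one_smul]
    rw [← e2, e1]
  -- Step 3: conclude pointwise.
  intro a
  ext x
  have hmul : i x * i a = i (x * a) := (map_mul i x a).symm
  simp only [fourier, LinearMap.coe_comp, Function.comp_apply, LinearMap.coe_mk,
    AddHom.coe_mk, LinearMap.mulRight_apply]
  show tH (i x * i a) = tK (x * a)
  rw [hmul]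
  exact LinearMap.congr_fun key (x * a)

end Paper
end
end

section
/- Let H be a finite-dimensional semisimple Hopf algebra over an algebraically closed field of characteristic zero and D(H) its Drinfeld double. Regard H* as a D(H)-module via (a·f)(x) = f(S^{-1}(a_2) x a_1) for a ∈ H and g·f = gf for g ∈ H*, and regard H as a D(H)-module via a·h = a_1 h S(a_2) and f·h = f(S^{-1}(h_1)) h_2. Then the Fourier transform F : H → H*, F(h) = h ⇀ t_H, is an isomorphism of D(H)-modules. -/
open TensorProduct

noncomputable section

namespace Paper

set_option linter.unusedSectionVars false

variable (k : Type) [Field k]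



section HopfAux

open Coalgebra HopfAlgebra TensorProduct

variable {k : Type} [Field k] {H : Type} [Ring H] [HopfAlgebra k H]

/-- Uncurrying a trilinear map on `H ⊗ (H ⊗ H)`. -/
noncomputable def lift3 {M : Type} [AddCommGroup M] [Module k M]
    (φ : H →ₗ[k] H →ₗ[k] H →ₗ[k] M) : H ⊗[k] (H ⊗[k] H) →ₗ[k] M :=
  TensorProduct.lift ((TensorProduct.lift.equiv (RingHom.id k) H H M).toLinearMap ∘ₗ φ)

@[simp] lemma lift3_tmul {M : Type} [AddCommGroup M] [Module k M]
    (φ : H →ₗ[k] H →ₗ[k] H →ₗ[k] M) (x y z : H) :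
    lift3 φ (x ⊗ₜ[k] (y ⊗ₜ[k] z)) = φ x y z := rfl

/-- Coassociativity for sums: switching between left-nested and right-nested
Sweedler representations under any trilinear map. -/
lemma sum3 {M : Type} [AddCommGroup M] [Module k M]
    (φ : H →ₗ[k] H →ₗ[k] H →ₗ[k] M) {a : H} (r : Repr k a (H × H))
    (r1 : (i : r.ι) → Repr k (r.left i) (H × H)) (r2 : (i : r.ι) → Repr k (r.right i) (H × H)) :
    ∑ i ∈ r.index, ∑ j ∈ (r1 i).index,
      φ ((r1 i).left j) ((r1 i).right j) (r.right i)
    = ∑ i ∈ r.index, ∑ j ∈ (r2 i).index,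
      φ (r.left i) ((r2 i).left j) ((r2 i).right j) := by
  have h := Coalgebra.sum_tmul_tmul_eq (R := k) r r1 r2
  have h2 := congrArg (lift3 φ) h
  simpa [map_sum] using h2

/-- Trilinear map `(x, y, z) ↦ A x * B y * C z`. -/
noncomputable def m3 (A B C : H →ₗ[k] H) : H →ₗ[k] H →ₗ[k] H →ₗ[k] H :=
  ((LinearMap.mul k H).compl₁₂ A B).compr₂ ((LinearMap.lcomp k H C) ∘ₗ (LinearMap.mul k H))

@[simp] lemma m3_apply (A B C : H →ₗ[k] H) (x y z : H) :
    m3 A B C x y z = A x * B y * C z := rfl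

/-- Product of Sweedler representations is a Sweedler representation of the product. -/
noncomputable def reprMul {a b : H} {ι κ : Type} (ra : Repr k a ι) (rb : Repr k b κ) :
    Repr k (a * b) (ι × κ) where
  index := ra.index ×ˢ rb.index
  left := fun p => ra.left p.1 * rb.left p.2
  right := fun p => ra.right p.1 * rb.right p.2
  eq := by
    rw [Bialgebra.comul_mul, ← ra.eq, ← rb.eq, Finset.sum_mul_sum]
    rw [Finset.sum_product]
    simp [Algebra.TensorProduct.tmul_mul_tmul]

lemma sum_counit_smul_right {a : H} (r : Repr k a (H × H)) :
    ∑ i ∈ r.index, counit (R := k) (r.left i) • r.right i = a := by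
  have h := congrArg (TensorProduct.lid k H) (Coalgebra.sum_counit_tmul_eq (R := k) r)
  rw [map_sum] at h
  simp only [TensorProduct.lid_tmul] at h
  simpa using h

lemma sum_counit_smul_left {a : H} (r : Repr k a (H × H)) :
    ∑ i ∈ r.index, counit (R := k) (r.right i) • r.left i = a := by
  have h := congrArg (TensorProduct.rid k H) (Coalgebra.sum_tmul_counit_eq (R := k) r)
  rw [map_sum] at h
  simp only [TensorProduct.rid_tmul] at h
  simpa using h

lemma antipode_one' : antipode (R := k) (1 : H) = 1 := by
  have h := mul_antipode_rTensor_comul_apply (R := k) (A := H) 1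
  rw [Bialgebra.comul_one] at h
  rw [Algebra.TensorProduct.one_def] at h
  simpa using h

lemma counit_antipode' (a : H) :
    counit (R := k) (antipode (R := k) a) = counit (R := k) a := by
  obtain r := ℛ k a
  have h := congrArg (counit (R := k)) (sum_antipode_mul_eq_algebraMap_counit (R := k) r)
  simp only [map_sum, Bialgebra.counit_mul, Bialgebra.counit_algebraMap] at h
  calc counit (R := k) (antipode (R := k) a)
      = ∑ i ∈ r.index, counit (R := k) (r.right i) *
          counit (R := k) (antipode (R := k) (r.left i)) := by
        conv_lhs => rw [← sum_counit_smul_left r]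
        simp only [map_sum, map_smul, smul_eq_mul]
    _ = counit (R := k) a := by
        rw [← h]; apply Finset.sum_congr rfl; intro i _; rw [mul_comm]

end HopfAux
section HopfAux2

open Coalgebra HopfAlgebra TensorProduct

variable {k : Type} [Field k] {H : Type} [Ring H] [HopfAlgebra k H]

local notation "S" => HopfAlgebra.antipode (R := k) (A := H)
local notation "ε" => Coalgebra.counit (R := k) (A := H)

lemma L1 {c d : H} (rc : Repr k c (H × H)) (rd : Repr k d (H × H)) :
    ∑ i ∈ rc.index, ∑ j ∈ rd.index,
      rc.left i * rd.left j * (S (rd.right j) * S (rc.right i))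
    = (ε c * ε d) • (1 : H) := by
  have step : ∀ i ∈ rc.index,
      ∑ j ∈ rd.index, rc.left i * rd.left j * (S (rd.right j) * S (rc.right i))
      = ε d • (rc.left i * S (rc.right i)) := by
    intro i _
    calc ∑ j ∈ rd.index, rc.left i * rd.left j * (S (rd.right j) * S (rc.right i))
        = (rc.left i * (∑ j ∈ rd.index, rd.left j * S (rd.right j))) * S (rc.right i) := by
          rw [Finset.mul_sum, Finset.sum_mul]
          apply Finset.sum_congr rfl; intro j _
          simp [mul_assoc]
      _ = ε d • (rc.left i * S (rc.right i)) := by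
          rw [sum_mul_antipode_eq_smul rd]
          simp [mul_smul_comm, smul_mul_assoc]
  rw [Finset.sum_congr rfl step, ← Finset.smul_sum, sum_mul_antipode_eq_smul rc]
  rw [smul_smul, mul_comm (ε d) (ε c)]

lemma L2 {c d : H} (rc : Repr k c (H × H)) (rd : Repr k d (H × H)) :
    ∑ i ∈ rc.index, ∑ j ∈ rd.index,
      S (rc.left i * rd.left j) * (rc.right i * rd.right j)
    = (ε c * ε d) • (1 : H) := by
  have h : ∑ i ∈ rc.index ×ˢ rd.index,
      S (rc.left i.1 * rd.left i.2) * (rc.right i.1 * rd.right i.2)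
      = Coalgebra.counit (R := k) (c * d) • (1 : H) :=
    sum_antipode_mul_eq_smul (R := k) (reprMul rc rd)
  rw [Finset.sum_product] at h
  rw [show Coalgebra.counit (R := k) (c * d) = ε c * ε d from Bialgebra.counit_mul c d] at h
  exact h

lemma antipode_mul' (a b : H) : S (a * b) = S b * S a := by
  obtain ra := ℛ k a
  obtain rb := ℛ k b
  let La : (i : ra.ι) → Repr k (ra.left i) (H × H) := fun i => ℛ k (ra.left i)
  let Ra : (i : ra.ι) → Repr k (ra.right i) (H × H) := fun i => ℛ k (ra.right i)
  let Lb : (j : rb.ι) → Repr k (rb.left j) (H × H) := fun j => ℛ k (rb.left j)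
  let Rb : (j : rb.ι) → Repr k (rb.right j) (H × H) := fun j => ℛ k (rb.right j)
  calc S (a * b)
      = ∑ i ∈ ra.index, ∑ j ∈ rb.index,
          (ε (ra.right i) * ε (rb.right j)) • S (ra.left i * rb.left j) := by
        conv_lhs => rw [← sum_counit_smul_left ra, ← sum_counit_smul_left rb]
        rw [Finset.sum_mul_sum, map_sum]
        apply Finset.sum_congr rfl; intro i _
        rw [map_sum]
        apply Finset.sum_congr rfl; intro j _
        rw [smul_mul_assoc, mul_smul_comm, map_smul, map_smul, smul_smul]
    _ = ∑ i ∈ ra.index, ∑ j ∈ rb.index, ∑ p ∈ (Ra i).index, ∑ q ∈ (Rb j).index,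
          S (ra.left i * rb.left j) * ((Ra i).left p * (Rb j).left q) *
            (S ((Rb j).right q) * S ((Ra i).right p)) := by
        apply Finset.sum_congr rfl; intro i _
        apply Finset.sum_congr rfl; intro j _
        rw [show (ε (ra.right i) * ε (rb.right j)) • S (ra.left i * rb.left j)
            = S (ra.left i * rb.left j) * ((ε (ra.right i) * ε (rb.right j)) • (1 : H)) by
          rw [mul_smul_comm, mul_one]]
        rw [← L1 (Ra i) (Rb j), Finset.mul_sum]
        apply Finset.sum_congr rfl; intro p _
        rw [Finset.mul_sum]
        apply Finset.sum_congr rfl; intro q _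
        simp [mul_assoc]
    _ = ∑ i ∈ ra.index, ∑ p ∈ (Ra i).index, ∑ j ∈ rb.index, ∑ q ∈ (Rb j).index,
          S (ra.left i * rb.left j) * ((Ra i).left p * (Rb j).left q) *
            (S ((Rb j).right q) * S ((Ra i).right p)) := by
        apply Finset.sum_congr rfl; intro i _
        exact Finset.sum_comm
    _ = ∑ i ∈ ra.index, ∑ p ∈ (Ra i).index, ∑ j ∈ rb.index, ∑ q ∈ (Lb j).index,
          S (ra.left i * (Lb j).left q) * ((Ra i).left p * (Lb j).right q) *
            (S (rb.right j) * S ((Ra i).right p)) := by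
        apply Finset.sum_congr rfl; intro i _
        apply Finset.sum_congr rfl; intro p _
        have key := sum3 (M := H)
          (m3 (S ∘ₗ LinearMap.mulLeft k (ra.left i))
              (LinearMap.mulLeft k ((Ra i).left p))
              ((LinearMap.mulRight k (S ((Ra i).right p))) ∘ₗ S))
          rb Lb Rb
        simp only [m3_apply, LinearMap.comp_apply, LinearMap.mulLeft_apply,
          LinearMap.mulRight_apply] at key
        exact key.symm
    _ = ∑ i ∈ ra.index, ∑ j ∈ rb.index, ∑ q ∈ (Lb j).index, ∑ p ∈ (Ra i).index,
          S (ra.left i * (Lb j).left q) * ((Ra i).left p * (Lb j).right q) *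
            (S (rb.right j) * S ((Ra i).right p)) := by
        apply Finset.sum_congr rfl; intro i _
        rw [Finset.sum_comm]
        apply Finset.sum_congr rfl; intro j _
        exact Finset.sum_comm
    _ = ∑ j ∈ rb.index, ∑ i ∈ ra.index, ∑ q ∈ (Lb j).index, ∑ p ∈ (Ra i).index,
          S (ra.left i * (Lb j).left q) * ((Ra i).left p * (Lb j).right q) *
            (S (rb.right j) * S ((Ra i).right p)) := Finset.sum_comm
    _ = ∑ j ∈ rb.index, ∑ q ∈ (Lb j).index, ∑ i ∈ ra.index, ∑ p ∈ (Ra i).index,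
          S (ra.left i * (Lb j).left q) * ((Ra i).left p * (Lb j).right q) *
            (S (rb.right j) * S ((Ra i).right p)) := by
        apply Finset.sum_congr rfl; intro j _
        exact Finset.sum_comm
    _ = ∑ j ∈ rb.index, ∑ q ∈ (Lb j).index, ∑ i ∈ ra.index, ∑ p ∈ (La i).index,
          S ((La i).left p * (Lb j).left q) * ((La i).right p * (Lb j).right q) *
            (S (rb.right j) * S (ra.right i)) := by
        apply Finset.sum_congr rfl; intro j _
        apply Finset.sum_congr rfl; intro q _
        have key := sum3 (M := H)
          (m3 (S ∘ₗ LinearMap.mulRight k ((Lb j).left q))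
              (LinearMap.mulRight k ((Lb j).right q))
              ((LinearMap.mulLeft k (S (rb.right j))) ∘ₗ S))
          ra La Ra
        simp only [m3_apply, LinearMap.comp_apply, LinearMap.mulLeft_apply,
          LinearMap.mulRight_apply] at key
        exact key.symm
    _ = ∑ j ∈ rb.index, ∑ i ∈ ra.index,
          (ε (rb.left j) * ε (ra.left i)) • (S (rb.right j) * S (ra.right i)) := by
        apply Finset.sum_congr rfl; intro j _
        rw [Finset.sum_comm]
        apply Finset.sum_congr rfl; intro i _
        calc ∑ q ∈ (Lb j).index, ∑ p ∈ (La i).index,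
              S ((La i).left p * (Lb j).left q) * ((La i).right p * (Lb j).right q) *
                (S (rb.right j) * S (ra.right i))
            = (∑ p ∈ (La i).index, ∑ q ∈ (Lb j).index,
                S ((La i).left p * (Lb j).left q) * ((La i).right p * (Lb j).right q)) *
                (S (rb.right j) * S (ra.right i)) := by
              rw [Finset.sum_comm, Finset.sum_mul]
              apply Finset.sum_congr rfl; intro p _
              rw [Finset.sum_mul]
          _ = (ε (rb.left j) * ε (ra.left i)) • (S (rb.right j) * S (ra.right i)) := by
              rw [L2 (La i) (Lb j), smul_mul_assoc, one_mul,
                mul_comm (ε (ra.left i)) (ε (rb.left j))]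
    _ = S b * S a := by
        have hb : (S : H →ₗ[k] H) b = ∑ j ∈ rb.index, ε (rb.left j) • S (rb.right j) := by
          conv_lhs => rw [← sum_counit_smul_right rb]
          rw [map_sum]; apply Finset.sum_congr rfl; intro j _; rw [map_smul]
        have ha : (S : H →ₗ[k] H) a = ∑ i ∈ ra.index, ε (ra.left i) • S (ra.right i) := by
          conv_lhs => rw [← sum_counit_smul_right ra]
          rw [map_sum]; apply Finset.sum_congr rfl; intro i _; rw [map_smul]
        rw [ha, hb, Finset.sum_mul_sum]
        apply Finset.sum_congr rfl; intro j _
        apply Finset.sum_congr rfl; intro i _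
        rw [smul_mul_assoc, mul_smul_comm, smul_smul]

end HopfAux2
section HopfAux3

open Coalgebra HopfAlgebra TensorProduct

variable {k : Type} [Field k] {H : Type} [Ring H] [HopfAlgebra k H]

local notation "S" => HopfAlgebra.antipode (R := k) (A := H)
local notation "ε" => Coalgebra.counit (R := k) (A := H)
local notation "Δ" => Coalgebra.comul (R := k) (A := H)

/-- Trilinear map `(x, y, z) ↦ A x * B y * C z` into any algebra. -/
noncomputable def gm3 {M : Type} [Ring M] [Algebra k M] (A B C : H →ₗ[k] M) :
    H →ₗ[k] H →ₗ[k] H →ₗ[k] M :=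
  ((LinearMap.mul k M).compl₁₂ A B).compr₂ ((LinearMap.lcomp k M C) ∘ₗ (LinearMap.mul k M))

@[simp] lemma gm3_apply {M : Type} [Ring M] [Algebra k M] (A B C : H →ₗ[k] M) (x y z : H) :
    gm3 A B C x y z = A x * B y * C z := rfl

/-- Trilinear map `(y, u, v) ↦ (B y u) ⊗ₜ C v`. -/
noncomputable def tt3 (B : H →ₗ[k] H →ₗ[k] H) (C : H →ₗ[k] H) :
    H →ₗ[k] H →ₗ[k] H →ₗ[k] (H ⊗[k] H) :=
  B.compr₂ ((LinearMap.lcomp k (H ⊗[k] H) C) ∘ₗ (TensorProduct.mk k H H))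

@[simp] lemma tt3_apply (B : H →ₗ[k] H →ₗ[k] H) (C : H →ₗ[k] H) (x y z : H) :
    tt3 B C x y z = B x y ⊗ₜ[k] C z := rfl

/-- The "anti-comultiplication" map `x ↦ ∑ S x₂ ⊗ S x₁`. -/
noncomputable def psiMap : H →ₗ[k] (H ⊗[k] H) :=
  (TensorProduct.map S S) ∘ₗ (TensorProduct.comm k H H).toLinearMap ∘ₗ Δ

lemma psiMap_repr {c : H} (rc : Repr k c (H × H)) :
    psiMap (k := k) c = ∑ p ∈ rc.index, S (rc.right p) ⊗ₜ[k] S (rc.left p) := by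
  rw [psiMap, LinearMap.comp_apply, LinearMap.comp_apply, ← rc.eq]
  rw [LinearEquiv.coe_coe, map_sum, map_sum]
  simp

lemma AC1 {d : H} (rd : Repr k d (H × H)) :
    ∑ j ∈ rd.index, Δ (rd.left j) * Δ (S (rd.right j)) = ε d • (1 : H ⊗[k] H) := by
  have : ∀ j ∈ rd.index, Δ (rd.left j) * Δ (S (rd.right j))
      = Δ (rd.left j * S (rd.right j)) := fun j _ => (Bialgebra.comul_mul _ _).symm
  rw [Finset.sum_congr rfl this, ← map_sum, sum_mul_antipode_eq_smul rd, map_smul,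
    Bialgebra.comul_one]

lemma AC2 {m : H} (rm : Repr k m (H × H)) :
    ∑ i ∈ rm.index, psiMap (k := k) (rm.left i) * Δ (rm.right i)
    = ε m • (1 : H ⊗[k] H) := by
  let La : (i : rm.ι) → Repr k (rm.left i) (H × H) := fun i => ℛ k (rm.left i)
  let Ra : (i : rm.ι) → Repr k (rm.right i) (H × H) := fun i => ℛ k (rm.right i)
  -- trilinear φ (x,y,z) = (S y ⊗ S x) * Δ z
  let φ : H →ₗ[k] H →ₗ[k] H →ₗ[k] (H ⊗[k] H) :=
    (((TensorProduct.mk k H H).compl₁₂ S S).flip).compr₂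
      ((LinearMap.lcomp k (H ⊗[k] H) Δ) ∘ₗ (LinearMap.mul k (H ⊗[k] H)))
  have φ_apply : ∀ x y z : H, φ x y z = (S y ⊗ₜ[k] S x) * Δ z := fun _ _ _ => rfl
  calc ∑ i ∈ rm.index, psiMap (k := k) (rm.left i) * Δ (rm.right i)
      = ∑ i ∈ rm.index, ∑ p ∈ (La i).index,
          φ ((La i).left p) ((La i).right p) (rm.right i) := by
        apply Finset.sum_congr rfl; intro i _
        rw [psiMap_repr (La i), Finset.sum_mul]
        apply Finset.sum_congr rfl; intro p _
        rw [φ_apply]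
    _ = ∑ i ∈ rm.index, ∑ p ∈ (Ra i).index,
          (S ((Ra i).left p) ⊗ₜ[k] S (rm.left i)) * Δ ((Ra i).right p) := by
        rw [sum3 φ rm La Ra]
        apply Finset.sum_congr rfl; intro i _
        apply Finset.sum_congr rfl; intro p _
        rw [φ_apply]
    _ = ∑ i ∈ rm.index, ∑ p ∈ (Ra i).index, ∑ w ∈ (ℛ k ((Ra i).right p)).index,
          (tt3 ((LinearMap.mul k H).compl₁₂ S LinearMap.id)
            (LinearMap.mulLeft k (S (rm.left i))))
            ((Ra i).left p) ((ℛ k ((Ra i).right p)).left w) ((ℛ k ((Ra i).right p)).right w) := by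
        apply Finset.sum_congr rfl; intro i _
        apply Finset.sum_congr rfl; intro p _
        rw [← (ℛ k ((Ra i).right p)).eq, Finset.mul_sum]
        apply Finset.sum_congr rfl; intro w _
        simp [Algebra.TensorProduct.tmul_mul_tmul]
    _ = ∑ i ∈ rm.index, ∑ p ∈ (Ra i).index, ∑ w ∈ (ℛ k ((Ra i).left p)).index,
          (tt3 ((LinearMap.mul k H).compl₁₂ S LinearMap.id)
            (LinearMap.mulLeft k (S (rm.left i))))
            ((ℛ k ((Ra i).left p)).left w) ((ℛ k ((Ra i).left p)).right w) ((Ra i).right p) := by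
        apply Finset.sum_congr rfl; intro i _
        exact (sum3 _ (Ra i) (fun p => ℛ k ((Ra i).left p)) (fun p => ℛ k ((Ra i).right p))).symm
    _ = ∑ i ∈ rm.index, (1 : H) ⊗ₜ[k] (S (rm.left i) * rm.right i) := by
        apply Finset.sum_congr rfl; intro i _
        have inner : ∀ p ∈ (Ra i).index,
            ∑ w ∈ (ℛ k ((Ra i).left p)).index,
              (tt3 ((LinearMap.mul k H).compl₁₂ S LinearMap.id)
                (LinearMap.mulLeft k (S (rm.left i))))
                ((ℛ k ((Ra i).left p)).left w) ((ℛ k ((Ra i).left p)).right w) ((Ra i).right p)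
            = ε ((Ra i).left p) • ((1 : H) ⊗ₜ[k] (S (rm.left i) * (Ra i).right p)) := by
          intro p _
          have hsum := sum_antipode_mul_eq_smul (R := k) (ℛ k ((Ra i).left p))
          calc ∑ w ∈ (ℛ k ((Ra i).left p)).index,
                (tt3 ((LinearMap.mul k H).compl₁₂ S LinearMap.id)
                  (LinearMap.mulLeft k (S (rm.left i))))
                  ((ℛ k ((Ra i).left p)).left w) ((ℛ k ((Ra i).left p)).right w) ((Ra i).right p)
              = (∑ w ∈ (ℛ k ((Ra i).left p)).index,
                  S ((ℛ k ((Ra i).left p)).left w) * (ℛ k ((Ra i).left p)).right w)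
                    ⊗ₜ[k] (S (rm.left i) * (Ra i).right p) := by
                rw [TensorProduct.sum_tmul]
                apply Finset.sum_congr rfl; intro w _
                simp [tt3_apply]
            _ = ε ((Ra i).left p) • ((1 : H) ⊗ₜ[k] (S (rm.left i) * (Ra i).right p)) := by
                rw [hsum, TensorProduct.smul_tmul']
        rw [Finset.sum_congr rfl inner]
        have : ∑ p ∈ (Ra i).index,
            ε ((Ra i).left p) • ((1 : H) ⊗ₜ[k] (S (rm.left i) * (Ra i).right p))
            = (1 : H) ⊗ₜ[k] (S (rm.left i) * (∑ p ∈ (Ra i).index,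
                ε ((Ra i).left p) • (Ra i).right p)) := by
          rw [Finset.mul_sum, TensorProduct.tmul_sum]
          apply Finset.sum_congr rfl; intro p _
          rw [mul_smul_comm, TensorProduct.tmul_smul]
        rw [this, sum_counit_smul_right (Ra i)]
    _ = ε m • (1 : H ⊗[k] H) := by
        rw [← TensorProduct.tmul_sum, sum_antipode_mul_eq_smul rm]
        rw [TensorProduct.tmul_smul, Algebra.TensorProduct.one_def]

lemma comul_antipode' (a : H) :
    Δ (S a) = psiMap (k := k) a := by
  obtain rm := ℛ k a
  let La : (i : rm.ι) → Repr k (rm.left i) (H × H) := fun i => ℛ k (rm.left i)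
  let Ra : (i : rm.ι) → Repr k (rm.right i) (H × H) := fun i => ℛ k (rm.right i)
  let f : H →ₗ[k] (H ⊗[k] H) := psiMap (k := k)
  let g : H →ₗ[k] (H ⊗[k] H) := Δ
  let h : H →ₗ[k] (H ⊗[k] H) := Δ ∘ₗ S
  have key := sum3 (gm3 f g h) rm La Ra
  simp only [gm3_apply] at key
  have right : ∑ i ∈ rm.index, ∑ p ∈ (Ra i).index,
      f (rm.left i) * g ((Ra i).left p) * h ((Ra i).right p) = psiMap (k := k) a := by
    have inner : ∀ i ∈ rm.index, ∑ p ∈ (Ra i).index,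
        f (rm.left i) * g ((Ra i).left p) * h ((Ra i).right p)
        = ε (rm.right i) • f (rm.left i) := by
      intro i _
      calc ∑ p ∈ (Ra i).index, f (rm.left i) * g ((Ra i).left p) * h ((Ra i).right p)
          = f (rm.left i) * ∑ p ∈ (Ra i).index,
              Δ ((Ra i).left p) * Δ (S ((Ra i).right p)) := by
            rw [Finset.mul_sum]
            apply Finset.sum_congr rfl; intro p _
            rw [mul_assoc]; rfl
        _ = ε (rm.right i) • f (rm.left i) := by
            rw [AC1 (Ra i), mul_smul_comm, mul_one]
    rw [Finset.sum_congr rfl inner]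
    have : ∑ i ∈ rm.index, ε (rm.right i) • f (rm.left i)
        = f (∑ i ∈ rm.index, ε (rm.right i) • rm.left i) := by
      rw [map_sum]
      exact Finset.sum_congr rfl fun i _ => (map_smul f _ _).symm
    rw [this, sum_counit_smul_left rm]
  have left : ∑ i ∈ rm.index, ∑ p ∈ (La i).index,
      f ((La i).left p) * g ((La i).right p) * h (rm.right i) = Δ (S a) := by
    have inner : ∀ i ∈ rm.index, ∑ p ∈ (La i).index,
        f ((La i).left p) * g ((La i).right p) * h (rm.right i)
        = ε (rm.left i) • h (rm.right i) := by
      intro i _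
      calc ∑ p ∈ (La i).index, f ((La i).left p) * g ((La i).right p) * h (rm.right i)
          = (∑ p ∈ (La i).index, psiMap (k := k) ((La i).left p) * Δ ((La i).right p)) *
              h (rm.right i) := by
            rw [Finset.sum_mul]
        _ = ε (rm.left i) • h (rm.right i) := by
            rw [AC2 (La i), smul_mul_assoc, one_mul]
    rw [Finset.sum_congr rfl inner]
    have : ∑ i ∈ rm.index, ε (rm.left i) • h (rm.right i)
        = h (∑ i ∈ rm.index, ε (rm.left i) • rm.right i) := by
      rw [map_sum]
      exact Finset.sum_congr rfl fun i _ => (map_smul h _ _).symm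
    rw [this, sum_counit_smul_right rm]
    rfl
  calc Δ (S a) = ∑ i ∈ rm.index, ∑ p ∈ (La i).index,
        f ((La i).left p) * g ((La i).right p) * h (rm.right i) := left.symm
    _ = ∑ i ∈ rm.index, ∑ p ∈ (Ra i).index,
        f (rm.left i) * g ((Ra i).left p) * h ((Ra i).right p) := key
    _ = psiMap (k := k) a := right

end HopfAux3
section HopfAux4

open Coalgebra HopfAlgebra TensorProduct

variable {k : Type} [Field k] {H : Type} [Ring H] [HopfAlgebra k H]

local notation "S" => HopfAlgebra.antipode (R := k) (A := H)
local notation "ε" => Coalgebra.counit (R := k) (A := H)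

lemma mul_algebraMap_eq_smul (c : k) (v : H) : v * algebraMap k H c = c • v := by
  rw [← Algebra.commutes, ← Algebra.smul_def]

lemma dual_ext' {v w : H} (h : ∀ φ : Module.Dual k H, φ v = φ w) : v = w := by
  have := (Module.forall_dual_apply_eq_zero_iff k (v - w)).mp
    (fun φ => by rw [map_sub, h φ, sub_self])
  exact sub_eq_zero.mp this

lemma conv_repr (f g : Module.Dual k H) {x : H} {ι : Type} (r : Repr k x ι) :
    conv k H f g x = ∑ i ∈ r.index, f (r.left i) * g (r.right i) := by
  rw [conv, LinearMap.comp_apply, LinearMap.comp_apply, ← r.eq, map_sum, map_sum]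
  apply Finset.sum_congr rfl; intro i _
  rfl

variable (tH : Module.Dual k H)

/-- (A): `∑ x₁ t(x₂) = t(x) 1` for a right coabsorbing functional. -/
lemma intA (hA : ∀ f : Module.Dual k H, conv k H f tH = f 1 • tH)
    {x : H} {ι : Type} (r : Repr k x ι) :
    ∑ i ∈ r.index, tH (r.right i) • r.left i = tH x • (1 : H) := by
  apply dual_ext' (k := k); intro φ
  rw [map_sum, map_smul]
  have : ∑ i ∈ r.index, φ (tH (r.right i) • r.left i)
      = ∑ i ∈ r.index, φ (r.left i) * tH (r.right i) := by
    apply Finset.sum_congr rfl; intro i _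
    rw [map_smul, smul_eq_mul, mul_comm]
  rw [this, ← conv_repr φ tH r, hA φ]
  simp [mul_comm]

/-- (B): `∑ t(x₁) x₂ = t(x) 1` for a left coabsorbing functional. -/
lemma intB (hB : ∀ f : Module.Dual k H, conv k H tH f = f 1 • tH)
    {x : H} {ι : Type} (r : Repr k x ι) :
    ∑ i ∈ r.index, tH (r.left i) • r.right i = tH x • (1 : H) := by
  apply dual_ext' (k := k); intro φ
  rw [map_sum, map_smul]
  have : ∑ i ∈ r.index, φ (tH (r.left i) • r.right i)
      = ∑ i ∈ r.index, tH (r.left i) * φ (r.right i) := by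
    apply Finset.sum_congr rfl; intro i _
    rw [map_smul, smul_eq_mul]
  rw [this, ← conv_repr tH φ r, hB φ]
  simp [mul_comm]

/-- (C1): `∑ y₁ t(x y₂) = ∑ S(x₁) t(x₂ y)`. -/
lemma C1 (hA : ∀ f : Module.Dual k H, conv k H f tH = f 1 • tH)
    (x y : H) (rx : Repr k x (H × H)) (ry : Repr k y (H × H)) :
    ∑ j ∈ ry.index, tH (x * ry.right j) • ry.left j
    = ∑ i ∈ rx.index, tH (rx.right i * y) • S (rx.left i) := by
  symm
  let Lx : (i : rx.ι) → Repr k (rx.left i) (H × H) := fun i => ℛ k (rx.left i)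
  let Rx : (i : rx.ι) → Repr k (rx.right i) (H × H) := fun i => ℛ k (rx.right i)
  -- trilinear map family (for fixed j): (x₁,x₂,x₃) ↦ S x₁ * (x₂ * d) * algebraMap (tH (x₃ * c))
  let Φ : (j : ry.ι) → (H →ₗ[k] H →ₗ[k] H →ₗ[k] H) := fun j =>
    gm3 S (LinearMap.mulRight k (ry.left j))
      ((Algebra.linearMap k H) ∘ₗ tH ∘ₗ (LinearMap.mulRight k (ry.right j)))
  have Φ_apply : ∀ (j : ry.ι) (x₁ x₂ x₃ : H),
      Φ j x₁ x₂ x₃ = S x₁ * (x₂ * ry.left j) * algebraMap k H (tH (x₃ * ry.right j)) := by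
    intros; rfl
  calc ∑ i ∈ rx.index, tH (rx.right i * y) • S (rx.left i)
      = ∑ i ∈ rx.index, ∑ z ∈ (Rx i).index ×ˢ ry.index,
          tH ((Rx i).right z.1 * ry.right z.2) •
            (S (rx.left i) * ((Rx i).left z.1 * ry.left z.2)) := by
        apply Finset.sum_congr rfl; intro i _
        have key := intA tH hA (reprMul (Rx i) ry)
        calc tH (rx.right i * y) • S (rx.left i)
            = S (rx.left i) * (tH (rx.right i * y) • (1 : H)) := by
              rw [mul_smul_comm, mul_one]
          _ = S (rx.left i) * (∑ z ∈ (Rx i).index ×ˢ ry.index,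
                tH ((Rx i).right z.1 * ry.right z.2) •
                  ((Rx i).left z.1 * ry.left z.2)) := by rw [← key]; rfl
          _ = _ := by
              rw [Finset.mul_sum]
              apply Finset.sum_congr rfl; intro z _
              rw [mul_smul_comm]
    _ = ∑ j ∈ ry.index, ∑ i ∈ rx.index, ∑ p ∈ (Rx i).index,
          Φ j (rx.left i) ((Rx i).left p) ((Rx i).right p) := by
        rw [Finset.sum_comm]
        apply Finset.sum_congr rfl; intro i _
        rw [Finset.sum_product]
        rw [Finset.sum_comm]
        apply Finset.sum_congr rfl; intro j _
        apply Finset.sum_congr rfl; intro p _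
        rw [Φ_apply, mul_algebraMap_eq_smul]
    _ = ∑ j ∈ ry.index, ∑ i ∈ rx.index, ∑ p ∈ (Lx i).index,
          Φ j ((Lx i).left p) ((Lx i).right p) (rx.right i) := by
        apply Finset.sum_congr rfl; intro j _
        exact (sum3 (Φ j) rx Lx Rx).symm
    _ = ∑ j ∈ ry.index, tH (x * ry.right j) • ry.left j := by
        apply Finset.sum_congr rfl; intro j _
        have inner : ∀ i ∈ rx.index, ∑ p ∈ (Lx i).index,
            Φ j ((Lx i).left p) ((Lx i).right p) (rx.right i)
            = ε (rx.left i) • (tH (rx.right i * ry.right j) • ry.left j) := by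
          intro i _
          calc ∑ p ∈ (Lx i).index, Φ j ((Lx i).left p) ((Lx i).right p) (rx.right i)
              = ((∑ p ∈ (Lx i).index, S ((Lx i).left p) * (Lx i).right p) * ry.left j) *
                  algebraMap k H (tH (rx.right i * ry.right j)) := by
                rw [Finset.sum_mul, Finset.sum_mul]
                apply Finset.sum_congr rfl; intro p _
                rw [Φ_apply, mul_assoc (S ((Lx i).left p)) _ _, mul_assoc, mul_assoc, mul_assoc]
            _ = ε (rx.left i) • (tH (rx.right i * ry.right j) • ry.left j) := by
                rw [sum_antipode_mul_eq_smul (Lx i), smul_mul_assoc, one_mul, smul_mul_assoc,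
                  mul_algebraMap_eq_smul]
        rw [Finset.sum_congr rfl inner]
        have collapse : ∑ i ∈ rx.index, ε (rx.left i) • (tH (rx.right i * ry.right j) • ry.left j)
            = tH ((∑ i ∈ rx.index, ε (rx.left i) • rx.right i) * ry.right j) • ry.left j := by
          rw [Finset.sum_mul, map_sum, Finset.sum_smul]
          apply Finset.sum_congr rfl; intro i _
          rw [smul_mul_assoc, map_smul, smul_eq_mul, smul_smul]
        rw [collapse, sum_counit_smul_right rx]


/-- (C2): `∑ t(x₁ y) x₂ = ∑ t(x y₁) S(y₂)`. -/
lemma C2 (hB : ∀ f : Module.Dual k H, conv k H tH f = f 1 • tH)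
    (x y : H) (rx : Repr k x (H × H)) (ry : Repr k y (H × H)) :
    ∑ i ∈ rx.index, tH (rx.left i * y) • rx.right i
    = ∑ j ∈ ry.index, tH (x * ry.left j) • S (ry.right j) := by
  symm
  let Ly : (j : ry.ι) → Repr k (ry.left j) (H × H) := fun j => ℛ k (ry.left j)
  let Ry : (j : ry.ι) → Repr k (ry.right j) (H × H) := fun j => ℛ k (ry.right j)
  let Φ : (i : rx.ι) → (H →ₗ[k] H →ₗ[k] H →ₗ[k] H) := fun i =>
    gm3 ((Algebra.linearMap k H) ∘ₗ tH ∘ₗ (LinearMap.mulLeft k (rx.left i)))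
      (LinearMap.mulLeft k (rx.right i)) S
  have Φ_apply : ∀ (i : rx.ι) (y₁ y₂ y₃ : H),
      Φ i y₁ y₂ y₃ = algebraMap k H (tH (rx.left i * y₁)) * (rx.right i * y₂) * S y₃ := by
    intros; rfl
  calc ∑ j ∈ ry.index, tH (x * ry.left j) • S (ry.right j)
      = ∑ j ∈ ry.index, ∑ z ∈ rx.index ×ˢ (Ly j).index,
          tH (rx.left z.1 * (Ly j).left z.2) •
            ((rx.right z.1 * (Ly j).right z.2) * S (ry.right j)) := by
        apply Finset.sum_congr rfl; intro j _
        have key := intB tH hB (reprMul rx (Ly j))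
        calc tH (x * ry.left j) • S (ry.right j)
            = (tH (x * ry.left j) • (1 : H)) * S (ry.right j) := by
              rw [smul_mul_assoc, one_mul]
          _ = (∑ z ∈ rx.index ×ˢ (Ly j).index,
                tH (rx.left z.1 * (Ly j).left z.2) •
                  (rx.right z.1 * (Ly j).right z.2)) * S (ry.right j) := by rw [← key]; rfl
          _ = _ := by
              rw [Finset.sum_mul]
              apply Finset.sum_congr rfl; intro z _
              rw [smul_mul_assoc]
    _ = ∑ i ∈ rx.index, ∑ j ∈ ry.index, ∑ q ∈ (Ly j).index,
          Φ i ((Ly j).left q) ((Ly j).right q) (ry.right j) := by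
        have step : ∀ j ∈ ry.index,
            ∑ z ∈ rx.index ×ˢ (Ly j).index,
              tH (rx.left z.1 * (Ly j).left z.2) •
                ((rx.right z.1 * (Ly j).right z.2) * S (ry.right j))
            = ∑ i ∈ rx.index, ∑ q ∈ (Ly j).index,
                Φ i ((Ly j).left q) ((Ly j).right q) (ry.right j) := by
          intro j _
          rw [Finset.sum_product]
          apply Finset.sum_congr rfl; intro i _
          apply Finset.sum_congr rfl; intro q _
          rw [Φ_apply, ← Algebra.smul_def, smul_mul_assoc]
        rw [Finset.sum_congr rfl step, Finset.sum_comm]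
    _ = ∑ i ∈ rx.index, ∑ j ∈ ry.index, ∑ q ∈ (Ry j).index,
          Φ i (ry.left j) ((Ry j).left q) ((Ry j).right q) := by
        apply Finset.sum_congr rfl; intro i _
        exact sum3 (Φ i) ry Ly Ry
    _ = ∑ i ∈ rx.index, tH (rx.left i * y) • rx.right i := by
        apply Finset.sum_congr rfl; intro i _
        have inner : ∀ j ∈ ry.index, ∑ q ∈ (Ry j).index,
            Φ i (ry.left j) ((Ry j).left q) ((Ry j).right q)
            = ε (ry.right j) • (tH (rx.left i * ry.left j) • rx.right i) := by
          intro j _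
          calc ∑ q ∈ (Ry j).index, Φ i (ry.left j) ((Ry j).left q) ((Ry j).right q)
              = (algebraMap k H (tH (rx.left i * ry.left j)) * rx.right i) *
                  (∑ q ∈ (Ry j).index, (Ry j).left q * S ((Ry j).right q)) := by
                rw [Finset.mul_sum]
                apply Finset.sum_congr rfl; intro q _
                rw [Φ_apply]
                simp only [mul_assoc]
            _ = ε (ry.right j) • (tH (rx.left i * ry.left j) • rx.right i) := by
                rw [sum_mul_antipode_eq_smul (Ry j), mul_smul_comm, mul_one,
                  ← Algebra.smul_def]
        rw [Finset.sum_congr rfl inner]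
        have collapse : ∑ j ∈ ry.index,
            ε (ry.right j) • (tH (rx.left i * ry.left j) • rx.right i)
            = tH (rx.left i * (∑ j ∈ ry.index, ε (ry.right j) • ry.left j)) • rx.right i := by
          rw [Finset.mul_sum, map_sum, Finset.sum_smul]
          apply Finset.sum_congr rfl; intro j _
          rw [mul_smul_comm, map_smul, smul_eq_mul, smul_smul]
        rw [collapse, sum_counit_smul_left ry]

lemma exists_biIntegral [IsSemisimpleRing H] (hS : ∀ x : H, S (S x) = x) :
    ∃ Λ : H, ε Λ = 1 ∧ (∀ h : H, h * Λ = ε h • Λ) ∧ (∀ h : H, Λ * h = ε h • Λ) := by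
  -- first, a left integral
  have hleft : ∃ Λ₀ : H, ε Λ₀ = 1 ∧ ∀ h : H, h * Λ₀ = ε h • Λ₀ := by
    let I : Ideal H := RingHom.ker ((Bialgebra.counitAlgHom k H) : H →+* k)
    obtain ⟨J, hJ⟩ := exists_isCompl I
    have h1 : (1 : H) ∈ I ⊔ J := by rw [hJ.sup_eq_top]; exact Submodule.mem_top
    obtain ⟨u, hu, v, hv, huv⟩ := Submodule.mem_sup.mp h1
    have hεu : ε u = 0 := hu
    have hεv : ε v = 1 := by
      have := congrArg (ε) huv
      rw [map_add, hεu, zero_add, Bialgebra.counit_one] at this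
      exact this
    refine ⟨v, hεv, fun h => ?_⟩
    have hJ' : h * v - ε h • v ∈ J := by
      apply Submodule.sub_mem
      · have := J.smul_mem h hv
        simpa [smul_eq_mul] using this
      · have := J.smul_mem (algebraMap k H (ε h)) hv
        rw [smul_eq_mul, ← Algebra.smul_def] at this
        exact this
    have hI' : h * v - ε h • v ∈ I := by
      have : ε (h * v - ε h • v) = 0 := by
        rw [map_sub, Bialgebra.counit_mul, map_smul, hεv, mul_one, smul_eq_mul, mul_one,
          sub_self]
      exact this
    have := Submodule.disjoint_def.mp hJ.disjoint _ hI' hJ'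
    exact sub_eq_zero.mp this
  obtain ⟨Λ₀, hε₀, hL₀⟩ := hleft
  have hR : ∀ h : H, S Λ₀ * h = ε h • S Λ₀ := by
    intro h
    calc S Λ₀ * h = S Λ₀ * S (S h) := by rw [hS]
      _ = S (S h * Λ₀) := (antipode_mul' _ _).symm
      _ = S (ε (S h) • Λ₀) := by rw [hL₀]
      _ = ε h • S Λ₀ := by rw [map_smul, counit_antipode']
  refine ⟨Λ₀ * S Λ₀, ?_, fun h => ?_, fun h => ?_⟩
  · rw [Bialgebra.counit_mul, counit_antipode', hε₀, mul_one]
  · rw [← mul_assoc, hL₀ h, smul_mul_assoc]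
  · rw [mul_assoc, hR h, mul_smul_comm]

variable {Λ : H}

/-- (T'): `∑ t(Λ₁ u) Λ₂ = t(Λ) S(u)`. -/
lemma lamT' (hB : ∀ f : Module.Dual k H, conv k H tH f = f 1 • tH)
    (hΛr : ∀ h : H, Λ * h = ε h • Λ) (u : H) (rΛ : Repr k Λ (H × H)) :
    ∑ i ∈ rΛ.index, tH (rΛ.left i * u) • rΛ.right i = tH Λ • S u := by
  obtain ru := ℛ k u
  rw [C2 tH hB Λ u rΛ ru]
  have : ∀ j ∈ ru.index, tH (Λ * ru.left j) • S (ru.right j)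
      = ε (ru.left j) • (tH Λ • S (ru.right j)) := by
    intro j _
    rw [hΛr, map_smul, smul_eq_mul, mul_comm, mul_smul]
    exact smul_comm _ _ _
  rw [Finset.sum_congr rfl this]
  calc ∑ j ∈ ru.index, ε (ru.left j) • (tH Λ • S (ru.right j))
      = tH Λ • S (∑ j ∈ ru.index, ε (ru.left j) • ru.right j) := by
        rw [map_sum, Finset.smul_sum]
        apply Finset.sum_congr rfl; intro j _
        rw [map_smul, smul_comm]
    _ = tH Λ • S u := by rw [sum_counit_smul_right ru]

/-- (Q): `∑ t(Λ₂ y) S(Λ₁) = t(Λ) y`. -/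
lemma lamQ (hA : ∀ f : Module.Dual k H, conv k H f tH = f 1 • tH)
    (hΛr : ∀ h : H, Λ * h = ε h • Λ) (y : H) (rΛ : Repr k Λ (H × H)) :
    ∑ i ∈ rΛ.index, tH (rΛ.right i * y) • S (rΛ.left i) = tH Λ • y := by
  obtain ry := ℛ k y
  rw [← C1 tH hA Λ y rΛ ry]
  have : ∀ j ∈ ry.index, tH (Λ * ry.right j) • ry.left j
      = ε (ry.right j) • (tH Λ • ry.left j) := by
    intro j _
    rw [hΛr, map_smul, smul_eq_mul, mul_comm, mul_smul]
    exact smul_comm _ _ _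
  rw [Finset.sum_congr rfl this]
  calc ∑ j ∈ ry.index, ε (ry.right j) • (tH Λ • ry.left j)
      = tH Λ • (∑ j ∈ ry.index, ε (ry.right j) • ry.left j) := by
        rw [Finset.smul_sum]
        apply Finset.sum_congr rfl; intro j _
        rw [smul_comm]
    _ = tH Λ • y := by rw [sum_counit_smul_left ry]

/-- (P'): `∑ t(Λ₁ y) S(Λ₂) = t(Λ) y`. -/
lemma lamP (hB : ∀ f : Module.Dual k H, conv k H tH f = f 1 • tH)
    (hS : ∀ x : H, S (S x) = x)
    (hΛr : ∀ h : H, Λ * h = ε h • Λ) (y : H) (rΛ : Repr k Λ (H × H)) :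
    ∑ i ∈ rΛ.index, tH (rΛ.left i * y) • S (rΛ.right i) = tH Λ • y := by
  have h := congrArg (S) (lamT' tH hB hΛr y rΛ)
  rw [map_sum, map_smul, hS] at h
  calc ∑ i ∈ rΛ.index, tH (rΛ.left i * y) • S (rΛ.right i)
      = ∑ i ∈ rΛ.index, S (tH (rΛ.left i * y) • rΛ.right i) := by
        apply Finset.sum_congr rfl; intro i _; rw [map_smul]
    _ = tH Λ • y := h

/-- (FG): `∑ t(x Λ₂) Λ₁ = t(Λ) S(x)`. -/
lemma lamFG (hA : ∀ f : Module.Dual k H, conv k H f tH = f 1 • tH)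
    (hΛl : ∀ h : H, h * Λ = ε h • Λ) (x : H) (rΛ : Repr k Λ (H × H)) :
    ∑ j ∈ rΛ.index, tH (x * rΛ.right j) • rΛ.left j = tH Λ • S x := by
  obtain rx := ℛ k x
  rw [C1 tH hA x Λ rx rΛ]
  have : ∀ i ∈ rx.index, tH (rx.right i * Λ) • S (rx.left i)
      = ε (rx.right i) • (tH Λ • S (rx.left i)) := by
    intro i _
    rw [hΛl, map_smul, smul_eq_mul, mul_comm, mul_smul]
    exact smul_comm _ _ _
  rw [Finset.sum_congr rfl this]
  calc ∑ i ∈ rx.index, ε (rx.right i) • (tH Λ • S (rx.left i))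
      = tH Λ • S (∑ i ∈ rx.index, ε (rx.right i) • rx.left i) := by
        rw [map_sum, Finset.smul_sum]
        apply Finset.sum_congr rfl; intro i _
        rw [map_smul, smul_comm]
    _ = tH Λ • S x := by rw [sum_counit_smul_left rx]

/-- The trace formula: `t(Λ) · dim H = t(1)`. -/
lemma lamTrace [FiniteDimensional k H]
    (hB : ∀ f : Module.Dual k H, conv k H tH f = f 1 • tH)
    (hS : ∀ x : H, S (S x) = x)
    (hΛr : ∀ h : H, Λ * h = ε h • Λ) (hΛε : ε Λ = 1) :
    tH Λ * (Module.finrank k H : k) = tH 1 := by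
  obtain rΛ := ℛ k Λ
  let F' : H →ₗ[k] Module.Dual k H :=
    ((LinearMap.llcomp k H H k) tH) ∘ₗ (LinearMap.mul k H)
  have hF' : ∀ a y : H, F' a y = tH (a * y) := fun a y => rfl
  let E : H ⊗[k] H →ₗ[k] (H →ₗ[k] H) :=
    (dualTensorHom k H H) ∘ₗ (TensorProduct.map F' S)
  have h1 : E (Coalgebra.comul (R := k) Λ) = tH Λ • LinearMap.id := by
    apply LinearMap.ext; intro y
    rw [← rΛ.eq]
    simp only [E, map_sum, LinearMap.comp_apply, TensorProduct.map_tmul,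
      LinearMap.sum_apply, dualTensorHom_apply, LinearMap.smul_apply, LinearMap.id_apply]
    have : ∀ i ∈ rΛ.index, F' (rΛ.left i) y • S (rΛ.right i)
        = tH (rΛ.left i * y) • S (rΛ.right i) := fun i _ => by rw [hF']
    rw [Finset.sum_congr rfl this, lamP tH hB hS hΛr y rΛ]
  have h2 : LinearMap.trace k H (E (Coalgebra.comul (R := k) Λ)) = tH 1 := by
    rw [show E (Coalgebra.comul (R := k) Λ)
        = dualTensorHom k H H ((TensorProduct.map F' S) (Coalgebra.comul (R := k) Λ)) from rfl]
    rw [LinearMap.trace_eq_contract_apply]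
    rw [← rΛ.eq, map_sum, map_sum]
    have : ∀ i ∈ rΛ.index,
        contractLeft k H ((TensorProduct.map F' S) (rΛ.left i ⊗ₜ[k] rΛ.right i))
        = tH (rΛ.left i * S (rΛ.right i)) := by
      intro i _
      rw [TensorProduct.map_tmul, contractLeft_apply, hF']
    rw [Finset.sum_congr rfl this, ← map_sum, sum_mul_antipode_eq_smul rΛ, map_smul, hΛε,
      one_smul]
  rw [h1, map_smul, LinearMap.trace_id, smul_eq_mul] at h2
  exact h2

/-- `t ∘ S = t`. -/
lemma tS (hA : ∀ f : Module.Dual k H, conv k H f tH = f 1 • tH)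
    (hB : ∀ f : Module.Dual k H, conv k H tH f = f 1 • tH)
    (hΛr : ∀ h : H, Λ * h = ε h • Λ) (hΛ0 : tH Λ ≠ 0) (u : H) :
    tH (S u) = tH u := by
  obtain rΛ := ℛ k Λ
  have h := congrArg tH (lamT' tH hB hΛr u rΛ)
  rw [map_sum, map_smul, smul_eq_mul] at h
  have lhs : ∑ i ∈ rΛ.index, tH (tH (rΛ.left i * u) • rΛ.right i) = tH Λ * tH u := by
    have expand : ∑ i ∈ rΛ.index, tH (tH (rΛ.left i * u) • rΛ.right i)
        = ∑ i ∈ rΛ.index, tH (rΛ.right i) * tH (rΛ.left i * u) := by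
      apply Finset.sum_congr rfl; intro i _
      rw [map_smul, smul_eq_mul, mul_comm]
    rw [expand]
    have key := congrArg (tH ∘ₗ LinearMap.mulRight k u) (intA tH hA rΛ)
    rw [map_sum, map_smul] at key
    simp only [LinearMap.comp_apply, LinearMap.mulRight_apply, smul_eq_mul, one_mul] at key
    calc ∑ i ∈ rΛ.index, tH (rΛ.right i) * tH (rΛ.left i * u)
        = ∑ i ∈ rΛ.index, tH (tH (rΛ.right i) • rΛ.left i * u) := by
          apply Finset.sum_congr rfl; intro i _
          rw [smul_mul_assoc, map_smul, smul_eq_mul]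
      _ = tH Λ * tH u := key
  rw [lhs] at h
  exact mul_left_cancel₀ hΛ0 h.symm

/-- `S Λ = Λ`. -/
lemma lamS (hA : ∀ f : Module.Dual k H, conv k H f tH = f 1 • tH)
    (hB : ∀ f : Module.Dual k H, conv k H tH f = f 1 • tH)
    (hS : ∀ x : H, S (S x) = x)
    (hΛl : ∀ h : H, h * Λ = ε h • Λ) (hΛr : ∀ h : H, Λ * h = ε h • Λ)
    (hΛ0 : tH Λ ≠ 0) : S Λ = Λ := by
  obtain rΛ := ℛ k Λ
  have hSl : ∀ x : H, x * S Λ = ε x • S Λ := by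
    intro x
    calc x * S Λ = S (S x) * S Λ := by rw [hS]
      _ = S (Λ * S x) := (antipode_mul' _ _).symm
      _ = S (ε (S x) • Λ) := by rw [hΛr]
      _ = ε x • S Λ := by rw [map_smul, counit_antipode']
  have key : ∀ x : H, tH (x * (Λ - S Λ)) = 0 := by
    intro x
    rw [mul_sub, map_sub, hΛl, hSl, map_smul, map_smul,
      tS tH hA hB hΛr hΛ0 Λ, sub_self]
  have h := lamT' tH hB hΛr (Λ - S Λ) rΛ
  have hz : ∑ i ∈ rΛ.index, tH (rΛ.left i * (Λ - S Λ)) • rΛ.right i = 0 := by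
    apply Finset.sum_eq_zero; intro i _
    rw [key, zero_smul]
  rw [hz] at h
  have hSw : S (Λ - S Λ) = 0 := by
    have := h.symm
    rcases smul_eq_zero.mp this with h0 | h0
    · exact absurd h0 hΛ0
    · exact h0
  have : Λ - S Λ = 0 := by
    have := congrArg (S) hSw
    rw [hS, map_zero] at this
    exact this
  have := sub_eq_zero.mp this
  exact this.symm

/-- (R2): `ΔΛ · (u ⊗ 1) = ΔΛ · (1 ⊗ S u)` for a right integral `Λ`. -/
lemma R2 (hΛr : ∀ h : H, Λ * h = ε h • Λ) (u : H) :
    (Coalgebra.comul (R := k) Λ) * (u ⊗ₜ[k] (1 : H))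
    = (Coalgebra.comul (R := k) Λ) * ((1 : H) ⊗ₜ[k] S u) := by
  set D := Coalgebra.comul (R := k) Λ with hD
  obtain ru := ℛ k u
  let Lu : (j : ru.ι) → Repr k (ru.left j) (H × H) := fun j => ℛ k (ru.left j)
  let Ru : (j : ru.ι) → Repr k (ru.right j) (H × H) := fun j => ℛ k (ru.right j)
  let B : H →ₗ[k] H →ₗ[k] (H ⊗[k] H) :=
    (TensorProduct.mk k H H).compr₂ (LinearMap.mulLeft k D)
  let C' : H →ₗ[k] (H ⊗[k] H) := (TensorProduct.mk k H H (1 : H)) ∘ₗ S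
  let ψ : H →ₗ[k] H →ₗ[k] H →ₗ[k] (H ⊗[k] H) :=
    B.compr₂ ((LinearMap.lcomp k (H ⊗[k] H) C') ∘ₗ (LinearMap.mul k (H ⊗[k] H)))
  have ψ_apply : ∀ x y z : H, ψ x y z = D * (x ⊗ₜ[k] y) * ((1 : H) ⊗ₜ[k] S z) :=
    fun _ _ _ => rfl
  calc D * (u ⊗ₜ[k] (1 : H))
      = ∑ j ∈ ru.index, ∑ q ∈ (Ru j).index,
          ψ (ru.left j) ((Ru j).left q) ((Ru j).right q) := by
        have inner : ∀ j ∈ ru.index, ∑ q ∈ (Ru j).index,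
            ψ (ru.left j) ((Ru j).left q) ((Ru j).right q)
            = ε (ru.right j) • (D * (ru.left j ⊗ₜ[k] (1 : H))) := by
          intro j _
          calc ∑ q ∈ (Ru j).index, ψ (ru.left j) ((Ru j).left q) ((Ru j).right q)
              = D * (ru.left j ⊗ₜ[k] (∑ q ∈ (Ru j).index,
                  (Ru j).left q * S ((Ru j).right q))) := by
                rw [TensorProduct.tmul_sum, Finset.mul_sum]
                apply Finset.sum_congr rfl; intro q _
                rw [ψ_apply, mul_assoc, Algebra.TensorProduct.tmul_mul_tmul, mul_one]
            _ = ε (ru.right j) • (D * (ru.left j ⊗ₜ[k] (1 : H))) := by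
                rw [sum_mul_antipode_eq_smul (Ru j), TensorProduct.tmul_smul, mul_smul_comm]
        rw [Finset.sum_congr rfl inner]
        symm
        calc ∑ j ∈ ru.index, ε (ru.right j) • (D * (ru.left j ⊗ₜ[k] (1 : H)))
            = D * ((∑ j ∈ ru.index, ε (ru.right j) • ru.left j) ⊗ₜ[k] (1 : H)) := by
              rw [TensorProduct.sum_tmul, Finset.mul_sum]
              apply Finset.sum_congr rfl; intro j _
              rw [← TensorProduct.smul_tmul', mul_smul_comm]
          _ = D * (u ⊗ₜ[k] (1 : H)) := by rw [sum_counit_smul_left ru]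
    _ = ∑ j ∈ ru.index, ∑ q ∈ (Lu j).index,
          ψ ((Lu j).left q) ((Lu j).right q) (ru.right j) := (sum3 ψ ru Lu Ru).symm
    _ = D * ((1 : H) ⊗ₜ[k] S u) := by
        have inner : ∀ j ∈ ru.index, ∑ q ∈ (Lu j).index,
            ψ ((Lu j).left q) ((Lu j).right q) (ru.right j)
            = ε (ru.left j) • (D * ((1 : H) ⊗ₜ[k] S (ru.right j))) := by
          intro j _
          calc ∑ q ∈ (Lu j).index, ψ ((Lu j).left q) ((Lu j).right q) (ru.right j)
              = (D * (∑ q ∈ (Lu j).index, (Lu j).left q ⊗ₜ[k] (Lu j).right q)) *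
                  ((1 : H) ⊗ₜ[k] S (ru.right j)) := by
                rw [Finset.mul_sum, Finset.sum_mul]
                apply Finset.sum_congr rfl; intro q _
                rw [ψ_apply]
            _ = ε (ru.left j) • (D * ((1 : H) ⊗ₜ[k] S (ru.right j))) := by
                rw [(Lu j).eq, hD, ← Bialgebra.comul_mul, hΛr, map_smul, smul_mul_assoc]
        rw [Finset.sum_congr rfl inner]
        calc ∑ j ∈ ru.index, ε (ru.left j) • (D * ((1 : H) ⊗ₜ[k] S (ru.right j)))
            = D * ((1 : H) ⊗ₜ[k] S (∑ j ∈ ru.index, ε (ru.left j) • ru.right j)) := by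
              rw [map_sum, TensorProduct.tmul_sum, Finset.mul_sum]
              apply Finset.sum_congr rfl; intro j _
              rw [map_smul, TensorProduct.tmul_smul, mul_smul_comm]
          _ = D * ((1 : H) ⊗ₜ[k] S u) := by rw [sum_counit_smul_right ru]

/-- (R): `(u ⊗ 1) · ΔΛ = (1 ⊗ S u) · ΔΛ` for the two-sided integral. -/
lemma R1 (hA : ∀ f : Module.Dual k H, conv k H f tH = f 1 • tH)
    (hB : ∀ f : Module.Dual k H, conv k H tH f = f 1 • tH)
    (hS : ∀ x : H, S (S x) = x)
    (hΛl : ∀ h : H, h * Λ = ε h • Λ) (hΛr : ∀ h : H, Λ * h = ε h • Λ)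
    (hΛ0 : tH Λ ≠ 0) (u : H) :
    (u ⊗ₜ[k] (1 : H)) * (Coalgebra.comul (R := k) Λ)
    = ((1 : H) ⊗ₜ[k] S u) * (Coalgebra.comul (R := k) Λ) := by
  set D := Coalgebra.comul (R := k) Λ with hD
  let Θ : H ⊗[k] H →ₗ[k] H ⊗[k] H :=
    (TensorProduct.map S S) ∘ₗ (TensorProduct.comm k H H).toLinearMap
  have hΘD : Θ D = D := by
    have h1 := comul_antipode' (k := k) Λ
    rw [lamS tH hA hB hS hΛl hΛr hΛ0] at h1
    exact h1.symm
  have hanti : ∀ (w : H ⊗[k] H) (a b : H),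
      Θ (w * (a ⊗ₜ[k] b)) = (S b ⊗ₜ[k] S a) * Θ w := by
    intro w a b
    induction w using TensorProduct.induction_on with
    | zero => simp
    | tmul x y =>
        simp only [Θ, Algebra.TensorProduct.tmul_mul_tmul, LinearMap.comp_apply,
          LinearEquiv.coe_coe, TensorProduct.comm_tmul, TensorProduct.map_tmul]
        rw [antipode_mul', antipode_mul']
    | add w₁ w₂ ih₁ ih₂ => rw [add_mul, map_add, ih₁, ih₂, map_add, mul_add]
  have step' := R2 (k := k) hΛr (S (S u))
  rw [hS] at step'
  have h2' := congrArg Θ step'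
  rw [hanti, hanti, hΘD, antipode_one', hS] at h2'
  exact h2'.symm

/-- (T): `∑ t(u Λ₁) Λ₂ = t(Λ) S(u)`. -/
lemma lamT (hA : ∀ f : Module.Dual k H, conv k H f tH = f 1 • tH)
    (hB : ∀ f : Module.Dual k H, conv k H tH f = f 1 • tH)
    (hS : ∀ x : H, S (S x) = x)
    (hΛl : ∀ h : H, h * Λ = ε h • Λ) (hΛr : ∀ h : H, Λ * h = ε h • Λ)
    (hΛ0 : tH Λ ≠ 0) (u : H) (rΛ : Repr k Λ (H × H)) :
    ∑ i ∈ rΛ.index, tH (u * rΛ.left i) • rΛ.right i = tH Λ • S u := by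
  let κ : H ⊗[k] H →ₗ[k] H :=
    (TensorProduct.lid k H).toLinearMap ∘ₗ (LinearMap.rTensor H tH)
  have κ_apply : ∀ a b : H, κ (a ⊗ₜ[k] b) = tH a • b := by
    intro a b
    simp [κ, TensorProduct.lid_tmul]
  have h := congrArg κ (R1 tH hA hB hS hΛl hΛr hΛ0 u)
  rw [← rΛ.eq, Finset.mul_sum, Finset.mul_sum, map_sum, map_sum] at h
  calc ∑ i ∈ rΛ.index, tH (u * rΛ.left i) • rΛ.right i
      = ∑ i ∈ rΛ.index, κ ((u ⊗ₜ[k] (1:H)) * (rΛ.left i ⊗ₜ[k] rΛ.right i)) := by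
        apply Finset.sum_congr rfl; intro i _
        rw [Algebra.TensorProduct.tmul_mul_tmul, one_mul, κ_apply]
    _ = ∑ i ∈ rΛ.index, κ (((1:H) ⊗ₜ[k] S u) * (rΛ.left i ⊗ₜ[k] rΛ.right i)) := h
    _ = S u * ∑ i ∈ rΛ.index, tH (rΛ.left i) • rΛ.right i := by
        rw [Finset.mul_sum]
        apply Finset.sum_congr rfl; intro i _
        rw [Algebra.TensorProduct.tmul_mul_tmul, one_mul, κ_apply, mul_smul_comm]
    _ = tH Λ • S u := by
        rw [intB tH hB rΛ, mul_smul_comm, mul_one]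

/-- Symmetry: `t(xy) = t(yx)`. -/
lemma tSymm (hA : ∀ f : Module.Dual k H, conv k H f tH = f 1 • tH)
    (hB : ∀ f : Module.Dual k H, conv k H tH f = f 1 • tH)
    (hS : ∀ x : H, S (S x) = x)
    (hΛl : ∀ h : H, h * Λ = ε h • Λ) (hΛr : ∀ h : H, Λ * h = ε h • Λ)
    (hΛ0 : tH Λ ≠ 0) (x y : H) :
    tH (x * y) = tH (y * x) := by
  obtain rΛ := ℛ k Λ
  have h1 := congrArg (tH ∘ₗ LinearMap.mulRight k x) (lamQ tH hA hΛr y rΛ)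
  simp only [map_sum, map_smul, LinearMap.comp_apply, LinearMap.mulRight_apply,
    smul_mul_assoc, smul_eq_mul] at h1
  -- h1 : ∑ t(Λ₂ y) * t(S Λ₁ * x) = t Λ * t (y * x)
  have h2 := congrArg (tH ∘ₗ LinearMap.mulRight k y) (lamT tH hA hB hS hΛl hΛr hΛ0 (S x) rΛ)
  rw [hS] at h2
  simp only [map_sum, map_smul, LinearMap.comp_apply, LinearMap.mulRight_apply,
    smul_mul_assoc, smul_eq_mul] at h2
  -- h2 : ∑ t(S x * Λ₁) * t(Λ₂ * y) = t Λ * t (x * y)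
  have same : ∑ i ∈ rΛ.index, tH (rΛ.right i * y) * tH (S (rΛ.left i) * x)
      = ∑ i ∈ rΛ.index, tH (S x * rΛ.left i) * tH (rΛ.right i * y) := by
    apply Finset.sum_congr rfl; intro i _
    have e2 : tH (S (rΛ.left i) * x) = tH (S x * rΛ.left i) := by
      have e1 := tS tH hA hB hΛr hΛ0 (S (rΛ.left i) * x)
      rw [antipode_mul', hS] at e1
      exact e1.symm
    rw [e2, mul_comm]
  rw [h1, h2] at same
  exact mul_left_cancel₀ hΛ0 same.symm

/-- (*S): `∑ t(x h₂) S(h₁) = ∑ x₁ t(x₂ h)`. -/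
lemma starS (hA : ∀ f : Module.Dual k H, conv k H f tH = f 1 • tH)
    (hS : ∀ x : H, S (S x) = x)
    (x h' : H) (rx : Repr k x (H × H)) (rh : Repr k h' (H × H)) :
    ∑ j ∈ rh.index, tH (x * rh.right j) • S (rh.left j)
    = ∑ i ∈ rx.index, tH (rx.right i * h') • rx.left i := by
  have h := congrArg (S) (C1 tH hA x h' rx rh)
  rw [map_sum, map_sum] at h
  calc ∑ j ∈ rh.index, tH (x * rh.right j) • S (rh.left j)
      = ∑ j ∈ rh.index, S (tH (x * rh.right j) • rh.left j) := by
        apply Finset.sum_congr rfl; intro j _; rw [map_smul]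
    _ = ∑ i ∈ rx.index, S (tH (rx.right i * h') • S (rx.left i)) := h
    _ = ∑ i ∈ rx.index, tH (rx.right i * h') • rx.left i := by
        apply Finset.sum_congr rfl; intro i _; rw [map_smul, hS]

end HopfAux4

section Unfold

open Coalgebra HopfAlgebra TensorProduct

variable {k : Type} [Field k] {H : Type} [Ring H] [HopfAlgebra k H]

local notation "S" => HopfAlgebra.antipode (R := k) (A := H)

lemma fourier_apply (t : Module.Dual k H) (a x : H) : fourier k H t a x = t (x * a) := rfl

lemma adAct_repr (a h : H) (ra : Repr k a (H × H)) :
    adAct k H a h = ∑ i ∈ ra.index, ra.left i * (h * S (ra.right i)) := by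
  rw [adAct, LinearMap.comp_apply, LinearMap.comp_apply, ← ra.eq, map_sum, map_sum]
  rw [LinearMap.sum_apply]
  apply Finset.sum_congr rfl; intro i _
  rfl

lemma coadAct_apply (a : H) (f : Module.Dual k H) (x : H) (ra : Repr k a (H × H)) :
    coadAct k H a f x = f (∑ i ∈ ra.index, S (ra.right i) * (x * ra.left i)) := by
  rw [coadAct, LinearMap.comp_apply, ← ra.eq, map_sum, map_sum, map_sum, LinearMap.sum_apply]
  exact congrArg f (Finset.sum_congr rfl fun i _ => rfl)

lemma dualAct_repr (f : Module.Dual k H) (h : H) (rh : Repr k h (H × H)) :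
    dualAct k H f h = ∑ j ∈ rh.index, f (S (rh.left j)) • rh.right j := by
  rw [dualAct, LinearMap.comp_apply, LinearMap.comp_apply, ← rh.eq, map_sum, map_sum]
  apply Finset.sum_congr rfl; intro j _
  rfl

end Unfold
/-- the Fourier transform `F : H → H*` is an isomorphism of `D(H)`-modules,
i.e. it is bijective and intertwines the two actions of `H` (the adjoint action on `H` and
the coadjoint action on `H*`) and the two actions of `H*` (the action `f·h = ∑ f(S h₁) h₂`
on `H` and left convolution-multiplication on `H*`), which together generate the Drinfeld
double `D(H)`.  (Here `S⁻¹ = S` since `S² = id` for semisimple Hopf algebras.) -/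
theorem fourier_is_DH_module_iso
    (k : Type) [Field k] [IsAlgClosed k] [CharZero k]
    (H : Type) [Ring H] [HopfAlgebra k H] [FiniteDimensional k H] [IsSemisimpleRing H]
    (hS : ∀ x : H, HopfAlgebra.antipode (R := k) (HopfAlgebra.antipode (R := k) x) = x)
    (tH : Module.Dual k H)
    (htH : ∀ f : Module.Dual k H, conv k H f tH = f 1 • tH ∧ conv k H tH f = f 1 • tH)
    (htH1 : tH 1 = 1)
    :
    Function.Bijective (fourier k H tH) ∧
    (∀ (a h : H), fourier k H tH (adAct k H a h) = coadAct k H a (fourier k H tH h)) ∧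
    (∀ (f : Module.Dual k H) (h : H),
      fourier k H tH (dualAct k H f h) = conv k H f (fourier k H tH h)) := by
  classical
  have hA : ∀ f : Module.Dual k H, conv k H f tH = f 1 • tH := fun f => (htH f).1
  have hB : ∀ f : Module.Dual k H, conv k H tH f = f 1 • tH := fun f => (htH f).2
  obtain ⟨Λ, hΛε, hΛl, hΛr⟩ := exists_biIntegral (k := k) (H := H) hS
  haveI : Nontrivial H := nontrivial_of_ne 1 0 (fun h => by
    have h0 : tH (1 : H) = 0 := by rw [h, map_zero]
    rw [htH1] at h0
    exact one_ne_zero h0)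
  have hdim : ((Module.finrank k H : k)) ≠ 0 :=
    Nat.cast_ne_zero.mpr (Module.finrank_pos).ne'
  have htr : tH Λ * (Module.finrank k H : k) = 1 := by
    rw [lamTrace tH hB hS hΛr hΛε, htH1]
  have hΛ0 : tH Λ ≠ 0 := by
    intro h0; rw [h0, zero_mul] at htr; exact zero_ne_one htr
  have hker : ∀ w : H, fourier k H tH w = 0 → w = 0 := by
    intro w hw
    have hz : ∀ x : H, tH (x * w) = 0 := by
      intro x
      have := LinearMap.congr_fun hw x
      rwa [fourier_apply] at this
    obtain rΛ := Coalgebra.Repr.arbitrary k Λ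
    have h := lamT' tH hB hΛr w rΛ
    rw [Finset.sum_eq_zero (fun i _ => by rw [hz, zero_smul])] at h
    rcases smul_eq_zero.mp h.symm with h0 | h0
    · exact absurd h0 hΛ0
    · have := congrArg (HopfAlgebra.antipode (R := k) (A := H)) h0
      rwa [hS, map_zero] at this
  refine ⟨⟨?_, ?_⟩, ?_, ?_⟩
  · -- injectivity
    intro h₁ h₂ hF
    have h0 : fourier k H tH (h₁ - h₂) = 0 := by rw [map_sub, hF, sub_self]
    exact sub_eq_zero.mp (hker _ h0)
  · -- surjectivity
    intro f
    obtain rΛ := Coalgebra.Repr.arbitrary k Λ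
    refine ⟨(Module.finrank k H : k) •
      ∑ j ∈ rΛ.index, f (HopfAlgebra.antipode (R := k) (rΛ.left j)) • rΛ.right j, ?_⟩
    apply LinearMap.ext; intro x
    rw [fourier_apply]
    have key := congrArg (f ∘ₗ HopfAlgebra.antipode (R := k) (A := H))
      (lamFG tH hA hΛl x rΛ)
    simp only [map_sum, map_smul, LinearMap.comp_apply, smul_eq_mul, hS] at key
    calc tH (x * ((Module.finrank k H : k) •
          ∑ j ∈ rΛ.index, f (HopfAlgebra.antipode (R := k) (rΛ.left j)) • rΛ.right j))
        = (Module.finrank k H : k) *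
            ∑ j ∈ rΛ.index, tH (x * rΛ.right j) *
              f (HopfAlgebra.antipode (R := k) (rΛ.left j)) := by
          rw [mul_smul_comm, map_smul, smul_eq_mul, Finset.mul_sum, map_sum]
          congr 1
          apply Finset.sum_congr rfl; intro j _
          rw [mul_smul_comm, map_smul, smul_eq_mul, mul_comm]
      _ = (Module.finrank k H : k) * (tH Λ * f x) := by rw [key]
      _ = f x := by
          rw [← mul_assoc, mul_comm ((Module.finrank k H : k)) (tH Λ), htr, one_mul]
  · -- adjoint action
    intro a h
    apply LinearMap.ext; intro x
    obtain ra := Coalgebra.Repr.arbitrary k a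
    rw [fourier_apply, coadAct_apply a _ x ra, adAct_repr a h ra, fourier_apply]
    rw [Finset.mul_sum, Finset.sum_mul, map_sum, map_sum]
    apply Finset.sum_congr rfl; intro i _
    have e1 : x * (ra.left i * (h * HopfAlgebra.antipode (R := k) (ra.right i)))
        = (x * ra.left i * h) * HopfAlgebra.antipode (R := k) (ra.right i) := by
      simp [mul_assoc]
    have e2 : HopfAlgebra.antipode (R := k) (ra.right i) * (x * ra.left i) * h
        = HopfAlgebra.antipode (R := k) (ra.right i) * (x * ra.left i * h) := by
      simp [mul_assoc]
    rw [e1, e2]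
    exact tSymm tH hA hB hS hΛl hΛr hΛ0 _ _
  · -- dual action
    intro f h
    apply LinearMap.ext; intro x
    obtain rh := Coalgebra.Repr.arbitrary k h
    obtain rx := Coalgebra.Repr.arbitrary k x
    rw [fourier_apply, dualAct_repr f h rh, conv_repr f (fourier k H tH h) rx]
    have key := congrArg f (starS tH hA hS x h rx rh)
    simp only [map_sum, map_smul, smul_eq_mul] at key
    calc tH (x * ∑ j ∈ rh.index,
          f (HopfAlgebra.antipode (R := k) (rh.left j)) • rh.right j)
        = ∑ j ∈ rh.index, tH (x * rh.right j) *
            f (HopfAlgebra.antipode (R := k) (rh.left j)) := by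
          rw [Finset.mul_sum, map_sum]
          apply Finset.sum_congr rfl; intro j _
          rw [mul_smul_comm, map_smul, smul_eq_mul, mul_comm]
      _ = ∑ i ∈ rx.index, tH (rx.right i * h) * f (rx.left i) := key
      _ = ∑ i ∈ rx.index, f (rx.left i) * fourier k H tH h (rx.right i) := by
          apply Finset.sum_congr rfl; intro i _
          rw [fourier_apply, mul_comm]

end Paper
end
end
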